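/- A set K ⊆ ℍₙ is C*-convex if and only if for every finite family X₁,...,Xₘ ∈ K and every family Φ₁,...,Φₘ of positive linear maps on Mₙ(ℂ) with Σᵢ Φᵢ(I) = I, one has Σᵢ Φᵢ(Xᵢ) ∈ K. -/

import Mathlib

noncomputable section
open scoped ComplexOrder

/-- C*-convexity for a set of n×n complex matrices. -/
def MatCstarConvex {n : ℕ} (K : Set (Matrix (Fin n) (Fin n) ℂ)) : Prop :=
  ∀ (m : ℕ) (X C : Fin m → Matrix (Fin n) (Fin n) ℂ),
    (∀ i, X i ∈ K) → ∑ i, star (C i) * C i = 1 →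
      ∑ i, star (C i) * X i * C i ∈ K

open Matrix in
private lemma stdBasis_conjT {n : ℕ} (i j : Fin n) :
    star (single i j (1:ℂ)) = single j i 1 := by
  ext a b
  simp [single, conjTranspose_apply, and_comm]

open Matrix in
private lemma sum_stdBasis_diag {n : ℕ} :
    ∑ j : Fin n, single j j (1:ℂ) = 1 := by
  ext a b
  rw [Matrix.sum_apply]
  simp only [single, of_apply]
  rw [Finset.sum_congr rfl (fun x _ => show (if x = a ∧ x = b then (1:ℂ) else 0)
      = if x = a then (if a = b then (1:ℂ) else 0) else 0 by
        by_cases h1 : x = a <;> by_cases h2 : a = b <;> simp_all)]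
  rw [Finset.sum_ite_eq' Finset.univ a (fun _ => if a = b then (1:ℂ) else 0)]
  simp [Matrix.one_apply]

open Matrix in
private lemma stdBasis_mul_diagonal {n : ℕ} (j k : Fin n) (d : Fin n → ℂ) :
    single j k (1:ℂ) * diagonal d = single j k (d k) := by
  ext a b
  rw [Matrix.mul_diagonal]
  by_cases h : k = b
  · subst h
    simp [single]
  · simp [single, h]

open Matrix in
private lemma diagonal_eq_sum_smul {n : ℕ} (d : Fin n → ℂ) :
    diagonal d = ∑ k, d k • single k k (1:ℂ) := by
  ext a b
  rw [Matrix.sum_apply]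
  simp only [Matrix.smul_apply, single, of_apply, smul_eq_mul]
  rw [Finset.sum_congr rfl (fun x _ => show (d x * if x = a ∧ x = b then (1:ℂ) else 0)
      = if x = a then (if a = b then d a else 0) else 0 by
        by_cases h1 : x = a <;> by_cases h2 : a = b <;> simp_all)]
  rw [Finset.sum_ite_eq' Finset.univ a (fun _ => if a = b then d a else 0)]
  simp [Matrix.diagonal_apply]

open Matrix MatrixOrder in
private lemma exists_kraus {n : ℕ} (X : Matrix (Fin n) (Fin n) ℂ) (hX : X.IsHermitian)
    (Φ : Matrix (Fin n) (Fin n) ℂ →ₗ[ℂ] Matrix (Fin n) (Fin n) ℂ)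
    (hΦ : ∀ A : Matrix (Fin n) (Fin n) ℂ, A.PosSemidef → (Φ A).PosSemidef) :
    ∃ C : Fin n × Fin n → Matrix (Fin n) (Fin n) ℂ,
      (∑ p, star (C p) * C p = Φ 1) ∧ (∑ p, star (C p) * X * C p = Φ X) := by
  set U : Matrix (Fin n) (Fin n) ℂ := (hX.eigenvectorUnitary : Matrix (Fin n) (Fin n) ℂ)
    with hU
  have hUU : star U * U = 1 :=
    (Matrix.mem_unitaryGroup_iff').mp (hX.eigenvectorUnitary).2
  have hUU' : U * star U = 1 :=
    (Matrix.mem_unitaryGroup_iff).mp (hX.eigenvectorUnitary).2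
  set d : Fin n → ℂ := RCLike.ofReal ∘ hX.eigenvalues with hd
  have hdiag : star U * X * U = diagonal d := by
    have := hX.conjStarAlgAut_star_eigenvectorUnitary
    rwa [Unitary.conjStarAlgAut_star_apply] at this
  -- the rank-one spectral projections
  set P : Fin n → Matrix (Fin n) (Fin n) ℂ :=
    fun k => U * single k k 1 * star U with hP
  have hPpos : ∀ k, (P k).PosSemidef := by
    intro k
    have h1 : (single k k (1:ℂ)).PosSemidef := by
      have := Matrix.posSemidef_conjTranspose_mul_self (single k k (1:ℂ))
      rwa [← Matrix.star_eq_conjTranspose, stdBasis_conjT,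
        Matrix.single_mul_single_same, one_mul] at this
    have h2 := h1.mul_mul_conjTranspose_same U
    show (U * single k k 1 * star U).PosSemidef
    rw [Matrix.star_eq_conjTranspose]
    exact h2
  set Q : Fin n → Matrix (Fin n) (Fin n) ℂ := fun k => Φ (P k) with hQdef
  have hQpos : ∀ k, (Q k).PosSemidef := fun k => hΦ _ (hPpos k)
  set B : Fin n → Matrix (Fin n) (Fin n) ℂ := fun k => CFC.sqrt (Q k) with hB
  have hBH : ∀ k, star (B k) = B k := fun k =>
    (CFC.sqrt_nonneg (Q k)).posSemidef.isHermitian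
  have hBB : ∀ k, B k * B k = Q k := fun k => CFC.sqrt_mul_sqrt_self (Q k) (hQpos k).nonneg
  refine ⟨fun p => U * single p.1 p.2 1 * B p.1, ?_, ?_⟩
  · have key : ∀ p : Fin n × Fin n,
        star (U * single p.1 p.2 1 * B p.1) * (U * single p.1 p.2 1 * B p.1)
          = B p.1 * single p.2 p.2 1 * B p.1 := by
      rintro ⟨k, j⟩
      simp only [Matrix.star_mul, hBH, stdBasis_conjT]
      calc B k * (single j k 1 * star U) * (U * single k j 1 * B k)
          = B k * (single j k 1 * (star U * U) * single k j 1) * B k := by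
            simp only [mul_assoc]
        _ = B k * single j j 1 * B k := by
            rw [hUU, mul_one, Matrix.single_mul_single_same, one_mul]
    rw [Finset.sum_congr rfl (fun p _ => key p), Fintype.sum_prod_type]
    have hsq : ∀ k : Fin n, ∑ j : Fin n, B k * single j j 1 * B k = Q k := by
      intro k
      calc ∑ j : Fin n, B k * single j j 1 * B k
          = B k * (∑ j : Fin n, single j j (1:ℂ)) * B k := by
            rw [Finset.mul_sum, Finset.sum_mul]
        _ = Q k := by rw [sum_stdBasis_diag, mul_one, hBB]
    rw [Finset.sum_congr rfl (fun k _ => hsq k)]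
    have h1 : ∑ k, Q k = Φ (∑ k, P k) := (map_sum Φ P Finset.univ).symm
    rw [h1]
    congr 1
    calc ∑ k, P k = U * (∑ k, single k k (1:ℂ)) * star U := by
          rw [Finset.mul_sum, Finset.sum_mul]
      _ = 1 := by rw [sum_stdBasis_diag, mul_one, hUU']
  · have key : ∀ p : Fin n × Fin n,
        star (U * single p.1 p.2 1 * B p.1) * X * (U * single p.1 p.2 1 * B p.1)
          = d p.1 • (B p.1 * single p.2 p.2 1 * B p.1) := by
      rintro ⟨k, j⟩
      simp only [Matrix.star_mul, hBH, stdBasis_conjT]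
      calc B k * (single j k 1 * star U) * X * (U * single k j 1 * B k)
          = B k * (single j k 1 * (star U * X * U) * single k j 1) * B k := by
            simp only [mul_assoc]
        _ = d k • (B k * single j j 1 * B k) := by
            rw [hdiag, stdBasis_mul_diagonal, Matrix.single_mul_single_same, mul_one,
              show single j j (d k) = d k • single j j (1:ℂ) by
                rw [Matrix.smul_single, smul_eq_mul, mul_one]]
            rw [mul_smul_comm, smul_mul_assoc]
    rw [Finset.sum_congr rfl (fun p _ => key p), Fintype.sum_prod_type]
    have hsq : ∀ k : Fin n,
        ∑ j : Fin n, d k • (B k * single j j 1 * B k) = d k • Q k := by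
      intro k
      rw [← Finset.smul_sum]
      congr 1
      calc ∑ j : Fin n, B k * single j j 1 * B k
          = B k * (∑ j : Fin n, single j j (1:ℂ)) * B k := by
            rw [Finset.mul_sum, Finset.sum_mul]
        _ = Q k := by rw [sum_stdBasis_diag, mul_one, hBB]
    rw [Finset.sum_congr rfl (fun k _ => hsq k)]
    have h1 : ∑ k, d k • Q k = Φ (∑ k, d k • P k) := by
      rw [map_sum]
      exact Finset.sum_congr rfl (fun k _ => (_root_.map_smul Φ (d k) (P k)).symm)
    rw [h1]
    congr 1
    calc ∑ k, d k • P k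
        = U * (∑ k, d k • single k k (1:ℂ)) * star U := by
          rw [Finset.mul_sum, Finset.sum_mul]
          exact Finset.sum_congr rfl (fun k _ => by
            rw [mul_smul_comm, smul_mul_assoc])
      _ = X := by
          rw [← diagonal_eq_sum_smul, ← hdiag]
          calc U * (star U * X * U) * star U
              = (U * star U) * X * (U * star U) := by simp only [mul_assoc]
            _ = X := by rw [hUU', one_mul, mul_one]

/-- A set of Hermitian matrices is C*-convex iff it is closed under sums
Σᵢ Φᵢ(Xᵢ) for unital families of positive linear maps Φᵢ. -/
theorem matCstarConvex_iff_closed_under_positive_maps {n : ℕ}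
    (K : Set (Matrix (Fin n) (Fin n) ℂ)) (hherm : ∀ X ∈ K, X.IsHermitian) :
    MatCstarConvex K ↔
      ∀ (m : ℕ) (X : Fin m → Matrix (Fin n) (Fin n) ℂ)
        (Φ : Fin m → Matrix (Fin n) (Fin n) ℂ →ₗ[ℂ] Matrix (Fin n) (Fin n) ℂ),
        (∀ i, X i ∈ K) →
        (∀ i, ∀ A : Matrix (Fin n) (Fin n) ℂ, A.PosSemidef → (Φ i A).PosSemidef) →
        ∑ i, Φ i 1 = 1 →
        ∑ i, Φ i (X i) ∈ K := by
  constructor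
  · intro hconv m X Φ hXK hΦpos hunital
    choose C hC1 hC2 using fun i => exists_kraus (X i) (hherm _ (hXK i)) (Φ i) (hΦpos i)
    let e : (Fin m × (Fin n × Fin n)) ≃ Fin (m * (n * n)) :=
      (Equiv.prodCongr (Equiv.refl (Fin m)) finProdFinEquiv).trans finProdFinEquiv
    have hmain := hconv (m * (n * n))
      (fun t => X (e.symm t).1) (fun t => C (e.symm t).1 (e.symm t).2)
      (fun t => hXK _) ?_
    · convert hmain using 1
      rw [← e.sum_comp (fun t => star (C (e.symm t).1 (e.symm t).2)
          * X (e.symm t).1 * C (e.symm t).1 (e.symm t).2)]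
      simp only [Equiv.symm_apply_apply]
      rw [Fintype.sum_prod_type]
      exact Finset.sum_congr rfl (fun i _ => (hC2 i).symm)
    · rw [← e.sum_comp (fun t => star (C (e.symm t).1 (e.symm t).2)
          * C (e.symm t).1 (e.symm t).2)]
      simp only [Equiv.symm_apply_apply]
      rw [Fintype.sum_prod_type]
      rw [Finset.sum_congr rfl (fun i _ => hC1 i)]
      exact hunital
  · intro h m X C hXK hsum
    let Φ : Fin m → Matrix (Fin n) (Fin n) ℂ →ₗ[ℂ] Matrix (Fin n) (Fin n) ℂ := fun i =>
      { toFun := fun A => star (C i) * A * C i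
        map_add' := fun A B => by noncomm_ring
        map_smul' := fun c A => by
          simp [Matrix.mul_smul, Matrix.smul_mul] }
    have := h m X Φ hXK (fun i A hA => by
      have := hA.conjTranspose_mul_mul_same (C i)
      simpa [Φ, Matrix.star_eq_conjTranspose] using this) (by
      simpa [Φ] using hsum)
    simpa [Φ] using this
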